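/- arXiv:2404.12572 — 4 statements merged into one kernel-verified Lean document; each statement's English description precedes it below -/
import Mathlib

section
/- Let σ : [0,∞) → [0,∞) be a continuous, monotonically increasing function with σ(z) → ∞ as z → ∞, let 0 ≤ a < T and M > 0. Suppose {ζ_ν}_{ν>0} is a family of monotonically increasing functions in W^{1,1}([a,T]) satisfying the differential inequality dζ_ν/dt ≤ M − ζ_ν² σ(ζ_ν/ν) for almost every t ∈ [a,T]. Then limsup_{ν→0} ζ_ν(T) = 0. -/
open MeasureTheory Filter Set

/-- Let σ : [0,∞) → [0,∞) be continuous, monotone increasing with σ(z) → ∞,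
let 0 ≤ a < T and M > 0. If {ζ_ν}_{ν>0} is a family of monotone increasing nonnegative
W^{1,1}([a,T]) functions satisfying ζ_ν' ≤ M − ζ_ν² σ(ζ_ν/ν) a.e., then
limsup_{ν→0⁺} ζ_ν(T) = 0. -/
theorem stmt0
    (σ : ℝ → ℝ)
    (hσ_nonneg : ∀ z, 0 ≤ z → 0 ≤ σ z)
    (hσ_cont : ContinuousOn σ (Set.Ici 0))
    (hσ_mono : MonotoneOn σ (Set.Ici 0))
    (hσ_top : Tendsto σ atTop atTop)
    (a T M : ℝ) (ha : 0 ≤ a) (haT : a < T) (hM : 0 < M)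
    (ζ ζ' : ℝ → ℝ → ℝ)
    (hζ_nonneg : ∀ ν, 0 < ν → ∀ t ∈ Set.Icc a T, 0 ≤ ζ ν t)
    (hζ_mono : ∀ ν, 0 < ν → MonotoneOn (ζ ν) (Set.Icc a T))
    (hζ_cont : ∀ ν, 0 < ν → ContinuousOn (ζ ν) (Set.Icc a T))
    (hζ'_int : ∀ ν, 0 < ν → IntegrableOn (ζ' ν) (Set.Icc a T))
    (hζ_deriv : ∀ ν, 0 < ν →
      ∀ᵐ t ∂(volume.restrict (Set.Icc a T)),
        HasDerivAt (ζ ν) (ζ' ν t) t ∧ ζ' ν t ≤ M - (ζ ν t) ^ 2 * σ (ζ ν t / ν)) :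
    Filter.limsup (fun ν => ζ ν T) (nhdsWithin 0 (Set.Ioi (0:ℝ))) = 0 := by
  have hTmem : T ∈ Set.Icc a T := ⟨haT.le, le_rfl⟩
  have key : ∀ ε : ℝ, 0 < ε → ∀ᶠ ν in nhdsWithin 0 (Set.Ioi (0:ℝ)), ζ ν T ≤ ε := by
    intro ε hε
    obtain ⟨z₀, hz₀⟩ := (tendsto_atTop.mp hσ_top (M / ε ^ 2 + 1)).exists_forall_of_atTop
    have hm : (0:ℝ) < max z₀ 1 := lt_max_of_lt_right one_pos
    have hδ : 0 < ε / max z₀ 1 := div_pos hε hm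
    filter_upwards [Ioo_mem_nhdsGT_of_mem (show (0:ℝ) ∈ Set.Ico 0 (ε / max z₀ 1) from ⟨le_rfl, hδ⟩)]
      with ν hν
    obtain ⟨hν0, hνδ⟩ := hν
    by_contra hcon
    push_neg at hcon
    -- continuity at T: ζ ν > ε on some left neighborhood of T within Icc a T
    have hcontT : ContinuousWithinAt (ζ ν) (Set.Icc a T) T := hζ_cont ν hν0 T hTmem
    have hev : (ζ ν) ⁻¹' (Set.Ioi ε) ∈ nhdsWithin T (Set.Icc a T) :=
      hcontT (Ioi_mem_nhds hcon)
    rw [Metric.mem_nhdsWithin_iff] at hev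
    obtain ⟨η, hη, hball⟩ := hev
    set c := max a (T - η / 2) with hc
    have hca : a ≤ c := le_max_left _ _
    have hcη : T - η / 2 ≤ c := le_max_right _ _
    have hcT : c < T := max_lt haT (by linarith)
    have hsub : Set.Ioc c T ⊆ Set.Icc a T := fun x hx => ⟨hca.trans hx.1.le, hx.2⟩
    have hgt : ∀ x ∈ Set.Ioc c T, ε < ζ ν x := by
      intro x hx
      apply hball
      refine ⟨?_, hsub hx⟩
      rw [Metric.mem_ball, Real.dist_eq, abs_lt]
      constructor <;> [linarith [hx.1, hx.2]; linarith [hx.2]]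
    -- pick a good point in Ioc c T
    have hae : ∀ᵐ t ∂(volume.restrict (Set.Ioc c T)),
        HasDerivAt (ζ ν) (ζ' ν t) t ∧ ζ' ν t ≤ M - (ζ ν t) ^ 2 * σ (ζ ν t / ν) :=
      ae_restrict_of_ae_restrict_of_subset hsub (hζ_deriv ν hν0)
    haveI : (ae (volume.restrict (Set.Ioc c T))).NeBot := by
      rw [ae_neBot, Ne, Measure.restrict_eq_zero, Real.volume_Ioc]
      simp only [ENNReal.ofReal_eq_zero, not_le]
      linarith
    obtain ⟨t, ⟨hderiv, hineq⟩, htmem⟩ := (hae.and (ae_restrict_mem measurableSet_Ioc)).exists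
    have htIcc : t ∈ Set.Icc a T := hsub htmem
    -- ζ' ν t ≥ 0 from monotonicity (left slopes)
    have hd0 : 0 ≤ ζ' ν t := by
      have hs := hasDerivAt_iff_tendsto_slope.mp hderiv
      have hs' : Tendsto (slope (ζ ν) t) (nhdsWithin t (Set.Iio t)) (nhds (ζ' ν t)) :=
        hs.mono_left (nhdsWithin_mono t (fun x hx => ne_of_lt hx))
      refine ge_of_tendsto hs' ?_
      filter_upwards [Ioo_mem_nhdsLT_of_mem (show t ∈ Set.Ioc c t from ⟨htmem.1, le_rfl⟩)]
        with s hsmem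
      have hsIcc : s ∈ Set.Icc a T := ⟨hca.trans hsmem.1.le, hsmem.2.le.trans htmem.2⟩
      have hle : ζ ν s ≤ ζ ν t := hζ_mono ν hν0 hsIcc htIcc hsmem.2.le
      have hslope : slope (ζ ν) t s = (ζ ν s - ζ ν t) / (s - t) := slope_def_field _ _ _
      rw [hslope, div_nonneg_iff]
      exact Or.inr ⟨by linarith, by linarith [hsmem.2]⟩
    -- ζ' ν t < 0 from the differential inequality
    have hζε : ε ≤ ζ ν t := (hgt t htmem).le
    have hεν : z₀ ≤ ε / ν := by
      have h1 : max z₀ 1 ≤ ε / ν := by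
        rw [le_div_iff₀ hν0]
        have := mul_lt_mul_of_pos_left hνδ hm
        have h2 : max z₀ 1 * (ε / max z₀ 1) = ε := by field_simp
        linarith
      exact (le_max_left _ _).trans h1
    have hζν : ε / ν ≤ ζ ν t / ν := by
      gcongr
    have hσ1 : M / ε ^ 2 + 1 ≤ σ (ε / ν) := hz₀ _ hεν
    have hεν0 : (0:ℝ) ≤ ε / ν := (div_pos hε hν0).le
    have hσ2 : σ (ε / ν) ≤ σ (ζ ν t / ν) :=
      hσ_mono hεν0 (hεν0.trans hζν) hζν
    have hbig : M + ε ^ 2 ≤ (ζ ν t) ^ 2 * σ (ζ ν t / ν) := by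
      have hσ3 : M / ε ^ 2 + 1 ≤ σ (ζ ν t / ν) := hσ1.trans hσ2
      have hε2 : (0:ℝ) < ε ^ 2 := by positivity
      have hζ2 : ε ^ 2 ≤ (ζ ν t) ^ 2 := by nlinarith
      have hσpos : 0 ≤ σ (ζ ν t / ν) := by nlinarith [div_pos hM hε2]
      calc M + ε ^ 2 = ε ^ 2 * (M / ε ^ 2 + 1) := by field_simp
        _ ≤ ε ^ 2 * σ (ζ ν t / ν) := by nlinarith
        _ ≤ (ζ ν t) ^ 2 * σ (ζ ν t / ν) := by nlinarith
    have hε2 : (0:ℝ) < ε ^ 2 := by positivity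
    linarith
  -- conclude via squeeze
  haveI : (nhdsWithin (0:ℝ) (Set.Ioi 0)).NeBot := nhdsGT_neBot 0
  have htend : Tendsto (fun ν => ζ ν T) (nhdsWithin 0 (Set.Ioi (0:ℝ))) (nhds 0) := by
    rw [tendsto_order]
    constructor
    · intro b hb
      filter_upwards [self_mem_nhdsWithin] with ν hν
      exact lt_of_lt_of_le hb (hζ_nonneg ν hν T hTmem)
    · intro b hb
      filter_upwards [key (b / 2) (half_pos hb)] with ν hν
      linarith
  exact htend.limsup_eq
end

section
/- Let u, (u^ν) ⊂ L²((0,T); L²(𝕋²)) with u^ν ⇀ u weakly, and suppose for each ν and all τ ∈ [0,T] the energy inequality ‖u^ν(τ)‖²_{L²} ≤ ‖u₀^ν‖²_{L²} + 2∫₀^τ ⟨f^ν, u^ν⟩_{L²} ds holds, where u₀^ν → u₀ strongly in L², f^ν → f strongly in L²_t L²_x, and u satisfies the energy balance ‖u(t)‖²_{L²} = ‖u₀‖²_{L²} + 2∫₀ᵗ ⟨f, u⟩_{L²} dτ for a.e. t. Then u^ν → u strongly in L²((0,T); L²(𝕋²)). -/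
open MeasureTheory Filter Set

open scoped RealInnerProductSpace

noncomputable section

set_option maxHeartbeats 1000000

instance : Fact (0 < 2 * Real.pi) := ⟨by positivity⟩

/-- The flat two-dimensional torus 𝕋². -/
abbrev Torus : Type := AddCircle (2 * Real.pi) × AddCircle (2 * Real.pi)

/-- The Hilbert space L²(𝕋²). -/
abbrev L2T : Type := MeasureTheory.Lp ℝ 2 (volume : Measure Torus)

/-- Integrability of the pointwise inner product of two L²-in-time functions. -/
lemma aux_inner_integrable {s : Set ℝ} (a b : ℝ → L2T)
    (ha : AEStronglyMeasurable a (volume.restrict s))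
    (hb : AEStronglyMeasurable b (volume.restrict s))
    (ha2 : IntegrableOn (fun t => ‖a t‖ ^ 2) s)
    (hb2 : IntegrableOn (fun t => ‖b t‖ ^ 2) s) :
    IntegrableOn (fun t => ⟪a t, b t⟫) s := by
  refine Integrable.mono' ((ha2.add hb2).const_mul (1/2)) (ha.inner hb)
    (Eventually.of_forall fun t => ?_)
  have h1 : |⟪a t, b t⟫| ≤ ‖a t‖ * ‖b t‖ := abs_real_inner_le_norm _ _
  have h2 : ‖a t‖ * ‖b t‖ ≤ (1/2) * (‖a t‖ ^ 2 + ‖b t‖ ^ 2) := by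
    nlinarith [sq_nonneg (‖a t‖ - ‖b t‖)]
  rw [Real.norm_eq_abs]
  exact h1.trans h2


/-- A weighted Young inequality. -/
lemma aux_young {a b c : ℝ} (hc : 0 < c) :
    a * b ≤ (c/2) * a^2 + (1/(2*c)) * b^2 := by
  have h3 : (c/2)*a^2 + (1/(2*c))*b^2 - a*b = (1/(2*c)) * (c*a - b)^2 := by
    field_simp
    ring
  nlinarith [mul_nonneg (le_of_lt (by positivity : (0:ℝ) < 1/(2*c))) (sq_nonneg (c*a - b))]

/-- Integrability of a weighted integrand. -/
lemma aux_weight {T : ℝ} (hT : 0 < T) (g : ℝ → ℝ) (hg : IntegrableOn g (Ioc 0 T)) :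
    IntegrableOn (fun s => (T - s) * g s) (Ioc 0 T) := by
  refine Integrable.mono' (hg.norm.const_mul T)
    (((continuous_const.sub continuous_id).aestronglyMeasurable).mul hg.1) ?_
  rw [ae_restrict_iff' measurableSet_Ioc]
  refine Eventually.of_forall fun s hs => ?_
  rw [Real.norm_eq_abs, abs_mul]
  have h1 : |T - s| ≤ T := by
    rw [abs_of_nonneg (by linarith [hs.2])]
    linarith [hs.1]
  calc |T - s| * |g s| ≤ T * |g s| := by
        exact mul_le_mul_of_nonneg_right h1 (abs_nonneg _)
    _ = T * ‖g s‖ := by rw [Real.norm_eq_abs]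

/-- The primitive of an integrable function is integrable on the interval. -/
lemma aux_primitive_integrable {T : ℝ} (g : ℝ → ℝ) (hg : IntegrableOn g (Ioc 0 T)) :
    IntegrableOn (fun τ => ∫ s in Ioc (0:ℝ) τ, g s) (Ioc 0 T) := by
  have h1 : IntegrableOn g (Icc (0:ℝ) T) := (integrableOn_Icc_iff_integrableOn_Ioc (by simp)).2 hg
  have h2 := intervalIntegral.continuousOn_primitive (f := g) (a := (0:ℝ)) (b := T)
    (μ := volume) h1
  exact (h2.integrableOn_Icc).mono_set Ioc_subset_Icc_self

/-- Fubini for the primitive: ∫₀ᵀ ∫₀^τ g = ∫₀ᵀ (T - s) g(s) ds. -/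
lemma aux_swap {T : ℝ} (hT : 0 < T) (g : ℝ → ℝ) (hg : IntegrableOn g (Ioc 0 T)) :
    ∫ τ in Ioc (0:ℝ) T, (∫ s in Ioc (0:ℝ) τ, g s)
      = ∫ s in Ioc (0:ℝ) T, (T - s) * g s := by
  set μ := volume.restrict (Ioc (0:ℝ) T) with hμdef
  haveI : IsFiniteMeasure μ := ⟨by
    rw [hμdef, Measure.restrict_apply_univ]; exact measure_Ioc_lt_top⟩
  have hD : MeasurableSet {q : ℝ × ℝ | q.2 ≤ q.1} :=
    measurableSet_le measurable_snd measurable_fst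
  set F : ℝ × ℝ → ℝ := ({q : ℝ × ℝ | q.2 ≤ q.1}).indicator (fun q => g q.2) with hFdef
  have hg2 : AEStronglyMeasurable (fun q : ℝ × ℝ => g q.2) (μ.prod μ) :=
    hg.aestronglyMeasurable.comp_snd
  have hFm : AEStronglyMeasurable F (μ.prod μ) := hg2.indicator hD
  have hg2i : Integrable (fun q : ℝ × ℝ => g q.2) (μ.prod μ) := by
    rw [integrable_prod_iff hg2]
    exact ⟨Eventually.of_forall fun x => hg, integrable_const (∫ y, ‖g y‖ ∂μ)⟩
  have hFi : Integrable F (μ.prod μ) :=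
    hg2i.mono hFm (Eventually.of_forall fun q => by
      simpa using norm_indicator_le_norm_self (fun q : ℝ × ℝ => g q.2) q)
  have key1 : ∀ τ ∈ Ioc (0:ℝ) T, (∫ s in Ioc (0:ℝ) τ, g s) = ∫ s, F (τ, s) ∂μ := by
    intro τ hτ
    have h1 : (fun s => F (τ, s)) = (Iic τ).indicator g := by
      funext s
      by_cases h : s ≤ τ <;> simp [hFdef, Set.indicator, h]
    rw [h1, hμdef, setIntegral_indicator measurableSet_Iic, Set.Ioc_inter_Iic,
      min_eq_right hτ.2]
  have key2 : ∀ s ∈ Ioc (0:ℝ) T, (∫ τ, F (τ, s) ∂μ) = (T - s) * g s := by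
    intro s hs
    have h1 : (fun τ => F (τ, s)) = (Ici s).indicator (fun _ => g s) := by
      funext τ
      by_cases h : s ≤ τ <;> simp [hFdef, Set.indicator, h]
    rw [h1, hμdef, setIntegral_indicator measurableSet_Ici, setIntegral_const]
    have h2 : Ioc (0:ℝ) T ∩ Ici s = Icc s T := by
      ext τ
      simp only [mem_inter_iff, mem_Ioc, mem_Ici, mem_Icc]
      constructor
      · rintro ⟨⟨_, h2⟩, h3⟩; exact ⟨h3, h2⟩
      · rintro ⟨h1', h2'⟩; exact ⟨⟨lt_of_lt_of_le hs.1 h1', h2'⟩, h1'⟩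
    rw [h2, Real.volume_real_Icc_of_le (by linarith [hs.2] : s ≤ T),
      smul_eq_mul]
  calc ∫ τ in Ioc (0:ℝ) T, (∫ s in Ioc (0:ℝ) τ, g s)
      = ∫ τ, (∫ s, F (τ, s) ∂μ) ∂μ := setIntegral_congr_fun measurableSet_Ioc key1
    _ = ∫ s, (∫ τ, F (τ, s) ∂μ) ∂μ := integral_integral_swap hFi
    _ = ∫ s in Ioc (0:ℝ) T, (T - s) * g s := setIntegral_congr_fun measurableSet_Ioc key2

/-- energy balance ⟹ strong convergence: let u^ν ⇀ u weakly in
L²((0,T);L²(𝕋²)), each u^ν satisfying the viscous energy inequality, with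
u₀^ν → u₀ strongly in L², f^ν → f strongly in L²_tL²_x, and u energy balanced.
Then u^ν → u strongly in L²((0,T);L²(𝕋²)). -/
theorem stmt7 (T : ℝ) (hT : 0 < T)
    (u : ℕ → ℝ → L2T) (U : ℝ → L2T)
    (u0 : ℕ → L2T) (u0lim : L2T)
    (f : ℕ → ℝ → L2T) (flim : ℝ → L2T)
    -- u^ν, u ∈ L²((0,T);L²)
    (hu_meas : ∀ n, AEStronglyMeasurable (u n) (volume.restrict (Set.Ioc 0 T)))
    (hU_meas : AEStronglyMeasurable U (volume.restrict (Set.Ioc 0 T)))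
    (hu_L2 : ∀ n, IntegrableOn (fun t => ‖u n t‖ ^ 2) (Set.Ioc 0 T))
    (hU_L2 : IntegrableOn (fun t => ‖U t‖ ^ 2) (Set.Ioc 0 T))
    -- f^ν, f ∈ L²((0,T);L²)
    (hf_meas : ∀ n, AEStronglyMeasurable (f n) (volume.restrict (Set.Ioc 0 T)))
    (hflim_meas : AEStronglyMeasurable flim (volume.restrict (Set.Ioc 0 T)))
    (hf_L2 : ∀ n, IntegrableOn (fun t => ‖f n t‖ ^ 2) (Set.Ioc 0 T))
    (hflim_L2 : IntegrableOn (fun t => ‖flim t‖ ^ 2) (Set.Ioc 0 T))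
    -- u^ν ⇀ u weakly in L²((0,T);L²(𝕋²))
    (hweak : ∀ v : ℝ → L2T, AEStronglyMeasurable v (volume.restrict (Set.Ioc 0 T)) →
      IntegrableOn (fun t => ‖v t‖ ^ 2) (Set.Ioc 0 T) →
      Tendsto (fun n => ∫ t in Set.Ioc (0:ℝ) T, ⟪u n t, v t⟫) atTop
        (nhds (∫ t in Set.Ioc (0:ℝ) T, ⟪U t, v t⟫)))
    -- energy inequality for the physical realization, for all 0 ≤ τ ≤ T
    (henergy : ∀ n, ∀ τ ∈ Set.Icc (0:ℝ) T,
      ‖u n τ‖ ^ 2 ≤ ‖u0 n‖ ^ 2 + 2 * ∫ s in Set.Ioc (0:ℝ) τ, ⟪f n s, u n s⟫)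
    -- u₀^ν → u₀ strongly in L²
    (hu0 : Tendsto (fun n => ‖u0 n - u0lim‖) atTop (nhds 0))
    -- f^ν → f strongly in L²_t L²_x
    (hf : Tendsto (fun n => ∫ t in Set.Ioc (0:ℝ) T, ‖f n t - flim t‖ ^ 2) atTop (nhds 0))
    -- u is energy balanced (for a.e. t)
    (hbal : ∀ᵐ t ∂(volume.restrict (Set.Ioc (0:ℝ) T)),
      ‖U t‖ ^ 2 = ‖u0lim‖ ^ 2 + 2 * ∫ s in Set.Ioc (0:ℝ) t, ⟪flim s, U s⟫) :
    Tendsto (fun n => ∫ t in Set.Ioc (0:ℝ) T, ‖u n t - U t‖ ^ 2) atTop (nhds 0) := by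
  -- basic measurability / integrability facts
  have hμfin : volume (Ioc (0:ℝ) T) < ⊤ := measure_Ioc_lt_top
  have hd_meas : ∀ n, AEStronglyMeasurable (fun s => f n s - flim s)
      (volume.restrict (Ioc 0 T)) := fun n => (hf_meas n).sub hflim_meas
  have hd_L2 : ∀ n, IntegrableOn (fun s => ‖f n s - flim s‖ ^ 2) (Ioc 0 T) := by
    intro n
    have hbd : Integrable (fun s => 2*‖f n s‖^2 + 2*‖flim s‖^2)
        (volume.restrict (Ioc 0 T)) :=
      ((hf_L2 n).const_mul 2).add (hflim_L2.const_mul 2)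
    refine Integrable.mono' hbd
      ((continuous_pow 2).comp_aestronglyMeasurable (hd_meas n).norm)
      (Eventually.of_forall fun s => ?_)
    have h1 : ‖f n s - flim s‖ ≤ ‖f n s‖ + ‖flim s‖ := norm_sub_le _ _
    have h2 : ‖f n s - flim s‖^2 ≤ (‖f n s‖ + ‖flim s‖)^2 :=
      pow_le_pow_left₀ (norm_nonneg _) h1 2
    rw [Real.norm_eq_abs, abs_of_nonneg (by positivity)]
    nlinarith [h2, sq_nonneg (‖f n s‖ - ‖flim s‖)]
  have hg_int : ∀ n, IntegrableOn (fun s => ⟪f n s, u n s⟫) (Ioc 0 T) := fun n =>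
    aux_inner_integrable _ _ (hf_meas n) (hu_meas n) (hf_L2 n) (hu_L2 n)
  have hglim_int : IntegrableOn (fun s => ⟪flim s, U s⟫) (Ioc 0 T) :=
    aux_inner_integrable _ _ hflim_meas hU_meas hflim_L2 hU_L2
  have hP_int : ∀ n, IntegrableOn (fun t => ⟪u n t, U t⟫) (Ioc 0 T) := fun n =>
    aux_inner_integrable _ _ (hu_meas n) hU_meas (hu_L2 n) hU_L2
  have hdu_int : ∀ n, IntegrableOn (fun s => ⟪f n s - flim s, u n s⟫) (Ioc 0 T) := fun n =>
    aux_inner_integrable _ _ (hd_meas n) (hu_meas n) (hd_L2 n) (hu_L2 n)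
  have hfu_int : ∀ n, IntegrableOn (fun s => ⟪flim s, u n s⟫) (Ioc 0 T) := fun n =>
    aux_inner_integrable _ _ hflim_meas (hu_meas n) hflim_L2 (hu_L2 n)
  -- abbreviations
  set Xn : ℕ → ℝ := fun n => ∫ t in Ioc (0:ℝ) T, ‖u n t‖ ^ 2 with hXndef
  set X : ℝ := ∫ t in Ioc (0:ℝ) T, ‖U t‖ ^ 2 with hXdef
  set eps : ℕ → ℝ := fun n => ∫ t in Ioc (0:ℝ) T, ‖f n t - flim t‖ ^ 2 with hepsdef
  set Fn : ℕ → ℝ := fun n => ∫ t in Ioc (0:ℝ) T, ‖f n t‖ ^ 2 with hFndef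
  set Hn : ℕ → ℝ := fun n => ∫ s in Ioc (0:ℝ) T, (T - s) * ⟪f n s - flim s, u n s⟫
    with hHndef
  set Kn : ℕ → ℝ := fun n => ∫ s in Ioc (0:ℝ) T, (T - s) * ⟪flim s, u n s⟫ with hKndef
  set K : ℝ := ∫ s in Ioc (0:ℝ) T, (T - s) * ⟪flim s, U s⟫ with hKdef
  set Pn : ℕ → ℝ := fun n => ∫ t in Ioc (0:ℝ) T, ⟪u n t, U t⟫ with hPndef
  have hXn0 : ∀ n, 0 ≤ Xn n := fun n =>
    setIntegral_nonneg measurableSet_Ioc fun t _ => by positivity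
  have heps0 : ∀ n, 0 ≤ eps n := fun n =>
    setIntegral_nonneg measurableSet_Ioc fun t _ => by positivity
  -- Step A: uniform L²ₜL²ₓ bound on uₙ
  have hbound : ∀ n, Xn n ≤ 2*T*‖u0 n‖^2 + 4*T^2*(Fn n) := by
    intro n
    have hptw : ∀ τ ∈ Ioc (0:ℝ) T,
        ‖u n τ‖ ^ 2 ≤ ‖u0 n‖ ^ 2 + 2*T*Fn n + 2*((1/(4*T))*Xn n) := by
      intro τ hτ
      have hsub : Ioc (0:ℝ) τ ⊆ Ioc (0:ℝ) T := Ioc_subset_Ioc le_rfl hτ.2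
      have h1 := henergy n τ (Ioc_subset_Icc_self hτ)
      have h2 : (∫ s in Ioc (0:ℝ) τ, ⟪f n s, u n s⟫)
          ≤ ∫ s in Ioc (0:ℝ) τ, (T*‖f n s‖^2 + (1/(4*T))*‖u n s‖^2) := by
        have hrhs : IntegrableOn (fun s => T*‖f n s‖^2 + (1/(4*T))*‖u n s‖^2)
            (Ioc 0 T) := ((hf_L2 n).const_mul T).add ((hu_L2 n).const_mul (1/(4*T)))
        refine setIntegral_mono_on ((hg_int n).mono_set hsub)
          (hrhs.mono_set hsub) measurableSet_Ioc fun s _ => ?_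
        have ha := real_inner_le_norm (f n s) (u n s)
        have hy := aux_young (a := ‖f n s‖) (b := ‖u n s‖) (c := 2*T) (by linarith)
        have he : (2*T/2)*‖f n s‖^2 + (1/(2*(2*T)))*‖u n s‖^2
            = T*‖f n s‖^2 + (1/(4*T))*‖u n s‖^2 := by ring
        linarith
      have h3 : (∫ s in Ioc (0:ℝ) τ, (T*‖f n s‖^2 + (1/(4*T))*‖u n s‖^2))
          ≤ ∫ s in Ioc (0:ℝ) T, (T*‖f n s‖^2 + (1/(4*T))*‖u n s‖^2) := by
        have hrhs : IntegrableOn (fun s => T*‖f n s‖^2 + (1/(4*T))*‖u n s‖^2)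
            (Ioc 0 T) := ((hf_L2 n).const_mul T).add ((hu_L2 n).const_mul (1/(4*T)))
        exact setIntegral_mono_set hrhs
          (Eventually.of_forall fun s => by positivity)
          (HasSubset.Subset.eventuallyLE hsub)
      have h4 : (∫ s in Ioc (0:ℝ) T, (T*‖f n s‖^2 + (1/(4*T))*‖u n s‖^2))
          = T*Fn n + (1/(4*T))*Xn n := by
        rw [integral_add ((hf_L2 n).const_mul T) ((hu_L2 n).const_mul (1/(4*T))),
          integral_const_mul, integral_const_mul]
      linarith [h1, h2, h3, h4]
    have h5 : Xn n ≤ ∫ τ in Ioc (0:ℝ) T, (‖u0 n‖ ^ 2 + 2*T*Fn n + 2*((1/(4*T))*Xn n)) := by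
      refine setIntegral_mono_on (hu_L2 n) ?_ measurableSet_Ioc hptw
      exact integrableOn_const hμfin.ne
    rw [setIntegral_const, Real.volume_real_Ioc_of_le hT.le, sub_zero,
      smul_eq_mul] at h5
    have hTc : T * (2*((1/(4*T))*Xn n)) = Xn n / 2 := by field_simp <;> ring
    have hFn0 : 0 ≤ Fn n := by
      rw [hFndef]
      exact setIntegral_nonneg measurableSet_Ioc fun t _ => by positivity
    nlinarith [h5, hTc, hFn0, sq_nonneg T]
  -- uniform constants
  obtain ⟨c₀, hc₀⟩ := hu0.bddAbove_range
  have hA : ∀ n, ‖u0 n‖ ≤ ‖u0lim‖ + c₀ := by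
    intro n
    have h1 : ‖u0 n - u0lim‖ ≤ c₀ := hc₀ ⟨n, rfl⟩
    calc ‖u0 n‖ = ‖u0lim + (u0 n - u0lim)‖ := by
          rw [show u0lim + (u0 n - u0lim) = u0 n from by abel]
      _ ≤ ‖u0lim‖ + ‖u0 n - u0lim‖ := norm_add_le _ _
      _ ≤ ‖u0lim‖ + c₀ := by linarith
  set A : ℝ := ‖u0lim‖ + c₀ with hAdef
  have hA0 : 0 ≤ A := le_trans (norm_nonneg _) (hA 0)
  obtain ⟨E, hE⟩ := hf.bddAbove_range
  have hE' : ∀ n, eps n ≤ E := fun n => hE ⟨n, rfl⟩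
  set Φ : ℝ := ∫ t in Ioc (0:ℝ) T, ‖flim t‖ ^ 2 with hΦdef
  have hΦ0 : 0 ≤ Φ := setIntegral_nonneg measurableSet_Ioc fun t _ => by positivity
  have hFn_le : ∀ n, Fn n ≤ 2*eps n + 2*Φ := by
    intro n
    have h1 : Fn n ≤ ∫ t in Ioc (0:ℝ) T, (2*‖f n t - flim t‖^2 + 2*‖flim t‖^2) := by
      refine setIntegral_mono_on (hf_L2 n)
        (((hd_L2 n).const_mul 2).add (hflim_L2.const_mul 2)) measurableSet_Ioc
        fun t _ => ?_
      have h2 : ‖f n t‖ ≤ ‖f n t - flim t‖ + ‖flim t‖ := by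
        calc ‖f n t‖ = ‖(f n t - flim t) + flim t‖ := by
              rw [show (f n t - flim t) + flim t = f n t from by abel]
          _ ≤ ‖f n t - flim t‖ + ‖flim t‖ := norm_add_le _ _
      have h3 : ‖f n t‖^2 ≤ (‖f n t - flim t‖ + ‖flim t‖)^2 :=
        pow_le_pow_left₀ (norm_nonneg _) h2 2
      nlinarith [h3, sq_nonneg (‖f n t - flim t‖ - ‖flim t‖)]
    rw [integral_add ((hd_L2 n).const_mul 2) (hflim_L2.const_mul 2),
      integral_const_mul, integral_const_mul] at h1
    simp only [hFndef, hepsdef, hΦdef] at h1 ⊢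
    exact h1
  set M : ℝ := 2*T*A^2 + 4*T^2*(2*E + 2*Φ) with hMdef
  have hXM : ∀ n, Xn n ≤ M := by
    intro n
    have h1 : ‖u0 n‖^2 ≤ A^2 := by nlinarith [norm_nonneg (u0 n), hA n]
    have h2 := hFn_le n
    have h3 := hE' n
    have h4 := hbound n
    have p1 : 2*T*‖u0 n‖^2 ≤ 2*T*A^2 :=
      mul_le_mul_of_nonneg_left h1 (by positivity)
    have p2 : Fn n ≤ 2*E + 2*Φ := by linarith
    have p3 : 4*T^2*Fn n ≤ 4*T^2*(2*E + 2*Φ) :=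
      mul_le_mul_of_nonneg_left p2 (by positivity)
    rw [hMdef]
    linarith
  have hM0 : 0 ≤ M := le_trans (hXn0 0) (hXM 0)
  -- Hₙ → 0
  have hHb : ∀ c, 0 < c → ∀ n, |Hn n| ≤ (c*T/2)*eps n + (T/(2*c))*M := by
    intro c hc n
    have habs : |Hn n| ≤ ∫ s in Ioc (0:ℝ) T, ‖(T - s) * ⟪f n s - flim s, u n s⟫‖ := by
      simp only [hHndef]
      rw [← Real.norm_eq_abs]
      exact norm_integral_le_integral_norm _
    have h1 : (∫ s in Ioc (0:ℝ) T, ‖(T - s) * ⟪f n s - flim s, u n s⟫‖)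
        ≤ ∫ s in Ioc (0:ℝ) T,
            ((c*T/2)*‖f n s - flim s‖^2 + (T/(2*c))*‖u n s‖^2) := by
      refine setIntegral_mono_on (aux_weight hT _ (hdu_int n)).norm
        (((hd_L2 n).const_mul (c*T/2)).add ((hu_L2 n).const_mul (T/(2*c))))
        measurableSet_Ioc fun s hs => ?_
      rw [Real.norm_eq_abs, abs_mul]
      have hTs : |T - s| ≤ T := by
        rw [abs_of_nonneg (by linarith [hs.2])]; linarith [hs.1]
      have hin : |⟪f n s - flim s, u n s⟫| ≤ ‖f n s - flim s‖ * ‖u n s‖ :=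
        abs_real_inner_le_norm _ _
      have hstep : |T - s| * |⟪f n s - flim s, u n s⟫|
          ≤ T * (‖f n s - flim s‖ * ‖u n s‖) := by
        exact mul_le_mul hTs hin (abs_nonneg _) hT.le
      refine hstep.trans ?_
      have hy := aux_young (a := ‖f n s - flim s‖) (b := ‖u n s‖) hc
      have hy2 : T * (‖f n s - flim s‖ * ‖u n s‖)
          ≤ T * ((c/2)*‖f n s - flim s‖^2 + (1/(2*c))*‖u n s‖^2) :=
        mul_le_mul_of_nonneg_left hy hT.le
      have he : T * ((c/2)*‖f n s - flim s‖^2 + (1/(2*c))*‖u n s‖^2)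
          = (c*T/2)*‖f n s - flim s‖^2 + (T/(2*c))*‖u n s‖^2 := by ring
      linarith
    have h2 : (∫ s in Ioc (0:ℝ) T,
        ((c*T/2)*‖f n s - flim s‖^2 + (T/(2*c))*‖u n s‖^2))
        = (c*T/2)*eps n + (T/(2*c))*Xn n := by
      rw [integral_add ((hd_L2 n).const_mul (c*T/2)) ((hu_L2 n).const_mul (T/(2*c))),
        integral_const_mul, integral_const_mul]
    have h3 : (T/(2*c))*Xn n ≤ (T/(2*c))*M :=
      mul_le_mul_of_nonneg_left (hXM n) (by positivity)
    linarith [habs, h1]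
  have hH0 : Tendsto Hn atTop (nhds 0) := by
    rw [Metric.tendsto_atTop]
    intro ε hε
    set c : ℝ := T*(M+1)/ε with hcdef
    have hc : 0 < c := div_pos (mul_pos hT (by linarith)) hε
    have hM1 : (0:ℝ) < M + 1 := by linarith
    have h2 : (T/(2*c))*M < ε/2 := by
      have heq : (T/(2*c))*M = ε*M/(2*(M+1)) := by
        rw [hcdef]
        field_simp
      rw [heq, div_lt_div_iff₀ (by linarith) (by norm_num)]
      nlinarith
    clear_value c
    have h3 : ∀ᶠ n in atTop, eps n < ε/(c*T) :=
      hf.eventually (gt_mem_nhds (div_pos hε (mul_pos hc hT)))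
    obtain ⟨N, hN⟩ := eventually_atTop.1 h3
    refine ⟨N, fun n hn => ?_⟩
    rw [Real.dist_eq, sub_zero]
    calc |Hn n| ≤ (c*T/2)*eps n + (T/(2*c))*M := hHb c hc n
      _ < (c*T/2)*(ε/(c*T)) + ε/2 :=
          add_lt_add_of_lt_of_le
            (mul_lt_mul_of_pos_left (hN n hn) (by positivity)) h2.le
      _ = ε := by
          rw [show (c*T/2)*(ε/(c*T)) = ε/2 from by
            field_simp [hc.ne', hT.ne'] <;> ring]
          ring
  -- Kₙ → K via weak convergence tested against v(s) = (T - s) • flim s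
  have hv_meas : AEStronglyMeasurable (fun s : ℝ => (T - s) • flim s)
      (volume.restrict (Ioc 0 T)) :=
    ((continuous_const.sub continuous_id).aestronglyMeasurable).smul hflim_meas
  have hv_L2 : IntegrableOn (fun t : ℝ => ‖(T - t) • flim t‖ ^ 2) (Ioc 0 T) := by
    refine Integrable.mono' (hflim_L2.const_mul (T^2))
      ((continuous_pow 2).comp_aestronglyMeasurable hv_meas.norm) ?_
    rw [ae_restrict_iff' measurableSet_Ioc]
    refine Eventually.of_forall fun s hs => ?_
    rw [Real.norm_eq_abs, abs_of_nonneg (by positivity)]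
    simp only [norm_smul, Real.norm_eq_abs]
    have hTs : |T - s| ≤ T := by
      rw [abs_of_nonneg (by linarith [hs.2])]; linarith [hs.1]
    have h2 : |T - s|^2 ≤ T^2 := pow_le_pow_left₀ (abs_nonneg _) hTs 2
    calc (|T - s| * ‖flim s‖)^2 = |T - s|^2 * ‖flim s‖^2 := mul_pow _ _ _
      _ ≤ T^2 * ‖flim s‖^2 := mul_le_mul_of_nonneg_right h2 (by positivity)
  have hinner_v : ∀ (w : ℝ → L2T) (t : ℝ),
      ⟪w t, (T - t) • flim t⟫ = (T - t) * ⟪flim t, w t⟫ := by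
    intro w t
    rw [real_inner_smul_right, real_inner_comm]
  have hK : Tendsto Kn atTop (nhds K) := by
    have h1 := hweak (fun s => (T - s) • flim s) hv_meas hv_L2
    have h2 : (fun n => ∫ t in Ioc (0:ℝ) T, ⟪u n t, (T - t) • flim t⟫) = Kn := by
      funext n
      simp only [hKndef]
      exact integral_congr_ae (Eventually.of_forall fun t => hinner_v (u n) t)
    have h3 : (∫ t in Ioc (0:ℝ) T, ⟪U t, (T - t) • flim t⟫) = K := by
      simp only [hKdef]
      exact integral_congr_ae (Eventually.of_forall fun t => hinner_v U t)
    rwa [h2, h3] at h1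
  -- Pₙ → X via weak convergence tested against U
  have hP : Tendsto Pn atTop (nhds X) := by
    have h1 := hweak U hU_meas hU_L2
    have h3 : (∫ t in Ioc (0:ℝ) T, ⟪U t, U t⟫) = X := by
      rw [hXdef]
      exact integral_congr_ae (Eventually.of_forall fun t =>
        real_inner_self_eq_norm_sq (U t))
    rwa [h3] at h1
  -- the energy-balance identity for X
  have hXid : X = T*‖u0lim‖^2 + 2*K := by
    have h1 : X = ∫ t in Ioc (0:ℝ) T,
        (‖u0lim‖ ^ 2 + 2 * ∫ s in Ioc (0:ℝ) t, ⟪flim s, U s⟫) :=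
      integral_congr_ae hbal
    have hc : Integrable (fun _ : ℝ => ‖u0lim‖ ^ 2) (volume.restrict (Ioc 0 T)) :=
      integrableOn_const hμfin.ne
    have hp : Integrable (fun τ => 2 * ∫ s in Ioc (0:ℝ) τ, ⟪flim s, U s⟫)
        (volume.restrict (Ioc 0 T)) := (aux_primitive_integrable _ hglim_int).const_mul 2
    rw [h1, integral_add hc hp,
      integral_const_mul, aux_swap hT _ hglim_int, setIntegral_const, Real.volume_real_Ioc_of_le hT.le,
      sub_zero, smul_eq_mul, ← hKdef]
  -- splitting of the weighted forcing term
  have hsplit : ∀ n, (∫ s in Ioc (0:ℝ) T, (T - s) * ⟪f n s, u n s⟫) = Hn n + Kn n := by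
    intro n
    rw [hHndef, hKndef,
      ← integral_add (aux_weight hT _ (hdu_int n)) (aux_weight hT _ (hfu_int n))]
    refine integral_congr_ae (Eventually.of_forall fun s => ?_)
    show (T - s) * ⟪f n s, u n s⟫
      = (T - s) * ⟪f n s - flim s, u n s⟫ + (T - s) * ⟪flim s, u n s⟫
    rw [inner_sub_left]
    ring
  -- the integrated energy inequality
  have hXnle : ∀ n, Xn n ≤ T*‖u0 n‖^2 + 2*(Hn n + Kn n) := by
    intro n
    have h1 : Xn n ≤ ∫ τ in Ioc (0:ℝ) T,
        (‖u0 n‖ ^ 2 + 2 * ∫ s in Ioc (0:ℝ) τ, ⟪f n s, u n s⟫) := by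
      refine setIntegral_mono_on (hu_L2 n)
        ((integrableOn_const hμfin.ne).add
          ((aux_primitive_integrable _ (hg_int n)).const_mul 2)) measurableSet_Ioc
        fun τ hτ => henergy n τ (Ioc_subset_Icc_self hτ)
    have hc : Integrable (fun _ : ℝ => ‖u0 n‖ ^ 2) (volume.restrict (Ioc 0 T)) :=
      integrableOn_const hμfin.ne
    have hp : Integrable (fun τ => 2 * ∫ s in Ioc (0:ℝ) τ, ⟪f n s, u n s⟫)
        (volume.restrict (Ioc 0 T)) := (aux_primitive_integrable _ (hg_int n)).const_mul 2
    rw [integral_add hc hp,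
      integral_const_mul, aux_swap hT _ (hg_int n), hsplit n, setIntegral_const,
      Real.volume_real_Ioc_of_le hT.le, sub_zero, smul_eq_mul] at h1
    exact h1
  -- the expansion of the error integral
  have hexp : ∀ n, (∫ t in Ioc (0:ℝ) T, ‖u n t - U t‖ ^ 2) = Xn n - 2*Pn n + X := by
    intro n
    have h1 : (∫ t in Ioc (0:ℝ) T, ‖u n t - U t‖ ^ 2)
        = ∫ t in Ioc (0:ℝ) T, ((‖u n t‖^2 - 2*⟪u n t, U t⟫) + ‖U t‖^2) :=
      integral_congr_ae (Eventually.of_forall fun t => norm_sub_sq_real _ _)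
    have hg2 : IntegrableOn (fun t => 2*⟪u n t, U t⟫) (Ioc 0 T) :=
      (hP_int n).const_mul 2
    have hi1 : IntegrableOn (fun t => ‖u n t‖^2 - 2*⟪u n t, U t⟫) (Ioc 0 T) :=
      (hu_L2 n).sub hg2
    rw [h1, integral_add hi1 hU_L2, integral_sub (hu_L2 n) hg2, integral_const_mul]
  -- squeeze
  have hu0n : Tendsto (fun n => ‖u0 n‖^2) atTop (nhds (‖u0lim‖^2)) := by
    have h1 : Tendsto u0 atTop (nhds u0lim) := tendsto_iff_norm_sub_tendsto_zero.2 hu0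
    exact ((continuous_norm.tendsto u0lim).comp h1).pow 2
  have hb : Tendsto (fun n => (T*‖u0 n‖^2 + 2*(Hn n + Kn n)) - 2*Pn n + X) atTop
      (nhds ((T*‖u0lim‖^2 + 2*(0 + K)) - 2*X + X)) :=
    (((hu0n.const_mul T).add ((hH0.add hK).const_mul 2)).sub (hP.const_mul 2)).add
      tendsto_const_nhds
  have hzero : (T*‖u0lim‖^2 + 2*(0 + K)) - 2*X + X = 0 := by rw [hXid]; ring
  rw [hzero] at hb
  refine squeeze_zero
    (fun n => setIntegral_nonneg measurableSet_Ioc fun t _ => by positivity)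
    (fun n => ?_) hb
  rw [hexp n]
  have := hXnle n
  linarith
end
end

section
/- Fix 1 ≤ q < 2 and δ ∈ (0, |𝕋²|). Let g : (0,|𝕋²|] → [0,∞) be monotonically increasing with ∫₀^{|𝕋²|} g(s)^q ds/s =: A^q < ∞. Then ∫₀^δ g(s)² ds/s ≤ A² / (log(|𝕋²|/δ))^{(2−q)/q}. -/
open MeasureTheory Filter Set

/-- fix 1 ≤ q < 2 and δ ∈ (0, |𝕋²|) (with |𝕋²| = (2π)²). If
g : (0,|𝕋²|] → [0,∞) is monotone increasing with ∫₀^{|𝕋²|} g(s)^q ds/s = A^q < ∞, then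
∫₀^δ g(s)² ds/s ≤ A² / (log(|𝕋²|/δ))^{(2−q)/q}. -/
theorem stmt9 (q : ℝ) (hq1 : 1 ≤ q) (hq2 : q < 2)
    (δ : ℝ) (hδ : δ ∈ Set.Ioo (0:ℝ) ((2 * Real.pi) ^ 2))
    (g : ℝ → ℝ)
    (hg_nonneg : ∀ s ∈ Set.Ioc (0:ℝ) ((2 * Real.pi) ^ 2), 0 ≤ g s)
    (hg_mono : MonotoneOn g (Set.Ioc (0:ℝ) ((2 * Real.pi) ^ 2)))
    (A : ℝ) (hA : 0 ≤ A)
    (hint : IntegrableOn (fun s => g s ^ q / s) (Set.Ioc (0:ℝ) ((2 * Real.pi) ^ 2)))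
    (hAq : ∫ s in Set.Ioc (0:ℝ) ((2 * Real.pi) ^ 2), g s ^ q / s = A ^ q) :
    (∫ s in Set.Ioc (0:ℝ) δ, g s ^ (2:ℝ) / s) ≤
      A ^ (2:ℝ) / Real.log ((2 * Real.pi) ^ 2 / δ) ^ ((2 - q) / q) := by
  obtain ⟨hδ0, hδT⟩ := hδ
  set T : ℝ := (2 * Real.pi) ^ 2 with hTdef
  have hT0 : 0 < T := by positivity
  set L : ℝ := Real.log (T / δ) with hLdef
  have hL : 0 < L := Real.log_pos (by rw [lt_div_iff₀ hδ0]; linarith)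
  have hq0 : 0 < q := lt_of_lt_of_le one_pos hq1
  set c : ℝ := g δ with hcdef
  have hδmem : δ ∈ Set.Ioc (0:ℝ) T := ⟨hδ0, hδT.le⟩
  have hc0 : 0 ≤ c := hg_nonneg δ hδmem
  have hsub1 : Set.Ioc (0:ℝ) δ ⊆ Set.Ioc 0 T := Set.Ioc_subset_Ioc_right hδT.le
  have hsub2 : Set.Ioc δ T ⊆ Set.Ioc 0 T := Set.Ioc_subset_Ioc_left hδ0.le
  have hint1 := hint.mono_set hsub1
  have hint2 := hint.mono_set hsub2
  have hsplit : (∫ s in Set.Ioc (0:ℝ) δ, g s ^ q / s) + (∫ s in Set.Ioc δ T, g s ^ q / s)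
      = A ^ q := by
    rw [← hAq, ← setIntegral_union (Set.Ioc_disjoint_Ioc_of_le le_rfl) measurableSet_Ioc hint1 hint2,
      Set.Ioc_union_Ioc_eq_Ioc hδ0.le hδT.le]
  have h1nonneg : 0 ≤ ∫ s in Set.Ioc (0:ℝ) δ, g s ^ q / s := by
    refine setIntegral_nonneg measurableSet_Ioc fun s hs => ?_
    exact div_nonneg (Real.rpow_nonneg (hg_nonneg s (hsub1 hs)) q) hs.1.le
  -- lower bound on second integral
  have hinv : IntegrableOn (fun s : ℝ => c ^ q / s) (Set.Ioc δ T) := by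
    have hcts : ContinuousOn (fun s : ℝ => c ^ q / s) (Set.Icc δ T) :=
      continuousOn_const.div continuousOn_id fun x hx => (lt_of_lt_of_le hδ0 hx.1).ne'
    exact hcts.integrableOn_Icc.mono_set Set.Ioc_subset_Icc_self
  have hlogeq : (∫ s in Set.Ioc δ T, c ^ q / s) = c ^ q * L := by
    rw [← intervalIntegral.integral_of_le hδT.le]
    simp_rw [div_eq_mul_inv]
    rw [intervalIntegral.integral_const_mul, integral_inv (by
      rw [Set.uIcc_of_le hδT.le]
      exact fun h => absurd h.1 (not_le.mpr hδ0))]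
  have hkey : c ^ q * L ≤ A ^ q := by
    have hmono2 : (∫ s in Set.Ioc δ T, c ^ q / s) ≤ ∫ s in Set.Ioc δ T, g s ^ q / s := by
      refine setIntegral_mono_on hinv hint2 measurableSet_Ioc fun s hs => ?_
      have hs0 : 0 < s := lt_of_le_of_lt hδ0.le (lt_of_lt_of_le hs.1 le_rfl)
      have hgs : c ≤ g s := hg_mono hδmem (hsub2 hs) hs.1.le
      gcongr
    have : (∫ s in Set.Ioc δ T, g s ^ q / s) ≤ A ^ q := by linarith
    linarith [hlogeq ▸ hmono2]
  -- main bound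
  set r : ℝ := (2 - q) / q with hrdef
  have hr0 : 0 ≤ r := div_nonneg (by linarith) hq0.le
  by_cases hInt : IntegrableOn (fun s => g s ^ (2:ℝ) / s) (Set.Ioc (0:ℝ) δ)
  · have hpt : ∀ s ∈ Set.Ioc (0:ℝ) δ, g s ^ (2:ℝ) / s ≤ c ^ (2 - q) * (g s ^ q / s) := by
      intro s hs
      have hs0 : 0 < s := hs.1
      have hgs0 : 0 ≤ g s := hg_nonneg s (hsub1 hs)
      have hgsc : g s ≤ c := hg_mono (hsub1 hs) hδmem hs.2
      have h2 : g s ^ (2:ℝ) = g s ^ (2 - q) * g s ^ q := by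
        rw [← Real.rpow_add' hgs0 (by norm_num)]
        norm_num
      rw [h2, mul_div_assoc]
      exact mul_le_mul_of_nonneg_right (Real.rpow_le_rpow hgs0 hgsc (by linarith))
        (div_nonneg (Real.rpow_nonneg hgs0 q) hs0.le)
    have hstep : (∫ s in Set.Ioc (0:ℝ) δ, g s ^ (2:ℝ) / s)
        ≤ c ^ (2 - q) * ∫ s in Set.Ioc (0:ℝ) δ, g s ^ q / s := by
      rw [← MeasureTheory.integral_const_mul]
      exact setIntegral_mono_on hInt (hint1.const_mul _) measurableSet_Ioc hpt
    have h2nonneg : 0 ≤ ∫ s in Set.Ioc δ T, g s ^ q / s := by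
      refine setIntegral_nonneg measurableSet_Ioc fun s hs => ?_
      exact div_nonneg (Real.rpow_nonneg (hg_nonneg s (hsub2 hs)) q) (lt_trans hδ0 hs.1).le
    have hAb : (∫ s in Set.Ioc (0:ℝ) δ, g s ^ q / s) ≤ A ^ q := by linarith
    have hcb : c ^ (2 - q) ≤ A ^ (2 - q) / L ^ r := by
      have h1 : c ^ q ≤ A ^ q / L := (le_div_iff₀ hL).mpr hkey
      have h2 : (c ^ q) ^ r ≤ (A ^ q / L) ^ r :=
        Real.rpow_le_rpow (Real.rpow_nonneg hc0 q) h1 hr0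
      have hqr : q * r = 2 - q := by rw [hrdef]; field_simp
      rw [← Real.rpow_mul hc0, hqr, Real.div_rpow (Real.rpow_nonneg hA q) hL.le,
        ← Real.rpow_mul hA, hqr] at h2
      exact h2
    calc (∫ s in Set.Ioc (0:ℝ) δ, g s ^ (2:ℝ) / s)
        ≤ c ^ (2 - q) * ∫ s in Set.Ioc (0:ℝ) δ, g s ^ q / s := hstep
      _ ≤ (A ^ (2 - q) / L ^ r) * A ^ q := by
          apply mul_le_mul hcb hAb h1nonneg
          exact div_nonneg (Real.rpow_nonneg hA _) (Real.rpow_nonneg hL.le _)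
      _ = A ^ (2:ℝ) / L ^ r := by
          rw [div_mul_eq_mul_div, ← Real.rpow_add' hA (by norm_num : (2 - q) + q ≠ 0)]
          norm_num
  · rw [integral_undef hInt]
    exact div_nonneg (Real.rpow_nonneg hA _) (Real.rpow_nonneg hL.le _)
end

section
/- Let q ∈ [1,2) and suppose ω ∈ L^{(1,q)}(𝕋²), i.e., ‖ω‖_{L^{(1,q)}} = (∫₀^{|𝕋²|} M_s(ω)^q ds/s)^{1/q} < ∞. Then ω ∈ L^{(1,2)}(𝕋²) and moreover the tail integrals decay uniformly: ∫₀^δ M_s(ω)² ds/s ≤ ‖ω‖²_{L^{(1,q)}} / (log(|𝕋²|/δ))^{(2−q)/q} for all δ ∈ (0,|𝕋²|). -/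
open MeasureTheory Filter Set

noncomputable section

/-- Rearrangement-invariant maximal function:
`Ms f s = sup { ∫_E |f| : E measurable, |E| = s }`. -/
def Ms (f : Torus → ℝ) (s : ℝ) : ℝ :=
  sSup {r : ℝ | ∃ E : Set Torus, MeasurableSet E ∧ volume E = ENNReal.ofReal s ∧
    r = ∫ x in E, |f x|}


local notation "T" => 2 * Real.pi

def ψ : Torus → ℝ := fun z => ((AddCircle.measurableEquivIoc T 0) z.1 : ℝ)

lemma ψ_measurable : Measurable ψ :=
  measurable_subtype_coe.comp ((AddCircle.measurableEquivIoc T 0).measurable.comp measurable_fst)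

lemma ψ_mem (z : Torus) : ψ z ∈ Ioc (0:ℝ) (0 + T) := ((AddCircle.measurableEquivIoc T 0) z.1).2

lemma strip_measure (a b : ℝ) :
    volume (ψ ⁻¹' Ioc a b) = volume (Ioc a b ∩ Ioc 0 (0 + T)) * ENNReal.ofReal T := by
  have h1 : ψ ⁻¹' Ioc a b = {x : AddCircle T | (AddCircle.measurableEquivIoc T 0 x : ℝ) ∈ Ioc a b} ×ˢ univ := by
    ext z; simp [ψ, Set.mem_prod]
  have hmeas : MeasurableSet {x : AddCircle T | (AddCircle.measurableEquivIoc T 0 x : ℝ) ∈ Ioc a b} :=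
    (measurable_subtype_coe.comp (AddCircle.measurableEquivIoc T 0).measurable) measurableSet_Ioc
  rw [h1, Measure.volume_eq_prod, Measure.prod_prod]
  have h2 : volume {x : AddCircle T | (AddCircle.measurableEquivIoc T 0 x : ℝ) ∈ Ioc a b}
      = volume (Ioc a b ∩ Ioc 0 (0 + T)) := by
    rw [AddCircle.add_projection_respects_measure T 0 hmeas]
    congr 1
    ext y
    constructor
    · rintro ⟨hy1, hy2⟩
      have : AddCircle.measurableEquivIoc T 0 (y : AddCircle T) = ⟨y, hy2⟩ := by
        change AddCircle.equivIoc T 0 _ = _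
        rw [Equiv.apply_eq_iff_eq_symm_apply]; rfl
      exact ⟨by simpa [this] using hy1, hy2⟩
    · rintro ⟨hy1, hy2⟩
      have : AddCircle.measurableEquivIoc T 0 (y : AddCircle T) = ⟨y, hy2⟩ := by
        change AddCircle.equivIoc T 0 _ = _
        rw [Equiv.apply_eq_iff_eq_symm_apply]; rfl
      exact ⟨by simpa [this] using hy1, hy2⟩
  rw [h2, AddCircle.measure_univ]

lemma F_measure {r : ℝ} (h0 : 0 ≤ r) (hr : r ≤ T) :
    volume (ψ ⁻¹' Iic r) = ENNReal.ofReal r * ENNReal.ofReal T := by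
  have h1 : ψ ⁻¹' Iic r = ψ ⁻¹' Ioc 0 r := by
    ext z
    have := ψ_mem z
    simp only [mem_preimage, mem_Iic, mem_Ioc]
    exact ⟨fun h => ⟨this.1, h⟩, fun h => h.2⟩
  rw [h1, strip_measure]
  have : Ioc (0:ℝ) r ∩ Ioc 0 (0 + T) = Ioc 0 r := by
    rw [inter_eq_left]
    exact Ioc_subset_Ioc le_rfl (by linarith)
  rw [this, Real.volume_Ioc, sub_zero]

lemma strip_measure_le (a b : ℝ) :
    volume (ψ ⁻¹' Ioc a b) ≤ ENNReal.ofReal (b - a) * ENNReal.ofReal T := by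
  rw [strip_measure]
  exact mul_le_mul_left (le_trans (measure_mono inter_subset_left)
    (le_of_eq (Real.volume_Ioc))) _

lemma torus_univ : volume (univ : Set Torus) = ENNReal.ofReal (T ^ 2) := by
  have : (univ : Set Torus) = (univ : Set (AddCircle T)) ×ˢ (univ : Set (AddCircle T)) := by
    simp
  rw [this, Measure.volume_eq_prod, Measure.prod_prod, AddCircle.measure_univ,
    ← ENNReal.ofReal_mul (by positivity), ← sq]

/-- Sierpinski: exact-measure measurable subset. -/
lemma exists_subset_measure_eq' {C : Set Torus} (hC : MeasurableSet C) {v : ℝ}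
    (hv0 : 0 ≤ v) (hv : ENNReal.ofReal v ≤ volume C) :
    ∃ D : Set Torus, D ⊆ C ∧ MeasurableSet D ∧ volume D = ENNReal.ofReal v := by
  set h : ℝ → ℝ := fun r => (volume (C ∩ ψ ⁻¹' Iic r)).toReal with hh
  have hTpos : (0:ℝ) < T := by positivity
  have hfin : ∀ s : Set Torus, (volume : Measure Torus) s < ⊤ := fun s => measure_lt_top volume s
  -- h 0 = 0
  have h0 : h 0 = 0 := by
    have : ψ ⁻¹' Iic (0:ℝ) = ∅ := by
      ext z; simpa using (ψ_mem z).1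
    simp [hh, this]
  -- h T = (volume C).toReal
  have hT : h T = (volume C).toReal := by
    have : ψ ⁻¹' Iic T = univ := by
      ext z
      have := (ψ_mem z).2
      simpa using by linarith
    simp [hh, this]
  -- Lipschitz bound on [0, T]
  have hlip : ∀ a b : ℝ, a ≤ b → h b ≤ h a + T * (b - a) := by
    intro a b hab
    have hsub : C ∩ ψ ⁻¹' Iic b ⊆ (C ∩ ψ ⁻¹' Iic a) ∪ ψ ⁻¹' Ioc a b := by
      rintro z ⟨hz1, hz2⟩
      rcases le_or_gt (ψ z) a with h | h
      · exact Or.inl ⟨hz1, h⟩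
      · exact Or.inr ⟨h, hz2⟩
    have hm : volume (C ∩ ψ ⁻¹' Iic b) ≤ volume ((C ∩ ψ ⁻¹' Iic a) ∪ ψ ⁻¹' Ioc a b) :=
      measure_mono hsub
    have hle := le_trans hm (measure_union_le _ _)
    have h2 := strip_measure_le a b
    have := le_trans hle (add_le_add (le_refl _) h2)
    have hconv : volume (C ∩ ψ ⁻¹' Iic a) + ENNReal.ofReal (b - a) * ENNReal.ofReal T
        = ENNReal.ofReal (h a + T * (b - a)) := by
      rw [← ENNReal.ofReal_mul (by linarith), ENNReal.ofReal_add (by positivity)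
        (by nlinarith), ENNReal.ofReal_toReal (hfin _).ne]
      ring_nf
    rw [hconv] at this
    have hha : 0 ≤ h a := ENNReal.toReal_nonneg
    have := ENNReal.toReal_mono ENNReal.ofReal_ne_top this
    rw [ENNReal.toReal_ofReal (by nlinarith)] at this
    exact this
  have hcont : ContinuousOn h (Icc 0 T) := by
    have : LipschitzWith (Real.toNNReal T) h := by
      apply LipschitzWith.of_dist_le_mul
      intro a b
      rw [Real.dist_eq, Real.dist_eq]
      rcases le_total a b with hab | hab
      · have h1 := hlip a b hab
        have h2 : h a ≤ h b := by
          apply ENNReal.toReal_mono (hfin _).ne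
          exact measure_mono (inter_subset_inter_right _ (preimage_mono (Iic_subset_Iic.2 hab)))
        rw [abs_of_nonpos (by linarith), abs_of_nonpos (by linarith)]
        have : (Real.toNNReal T : ℝ) = T := Real.coe_toNNReal _ hTpos.le
        rw [this]; nlinarith
      · have h1 := hlip b a hab
        have h2 : h b ≤ h a := by
          apply ENNReal.toReal_mono (hfin _).ne
          exact measure_mono (inter_subset_inter_right _ (preimage_mono (Iic_subset_Iic.2 hab)))
        rw [abs_of_nonneg (by linarith), abs_of_nonneg (by linarith)]
        have : (Real.toNNReal T : ℝ) = T := Real.coe_toNNReal _ hTpos.le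
        rw [this]; nlinarith
    exact this.continuous.continuousOn
  have hivt := intermediate_value_Icc hTpos.le hcont
  have hvmem : v ∈ Icc (h 0) (h T) := by
    constructor
    · rw [h0]; exact hv0
    · rw [hT]
      calc v = (ENNReal.ofReal v).toReal := (ENNReal.toReal_ofReal hv0).symm
        _ ≤ (volume C).toReal := ENNReal.toReal_mono (hfin _).ne hv
  obtain ⟨r, _, hr⟩ := hivt hvmem
  refine ⟨C ∩ ψ ⁻¹' Iic r, inter_subset_left,
    hC.inter (ψ_measurable measurableSet_Iic), ?_⟩
  rw [← hr, hh]
  simp only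
  rw [ENNReal.ofReal_toReal (hfin _).ne]

lemma exists_superset_measure_eq {E : Set Torus} (hE : MeasurableSet E) {s s' : ℝ}
    (hs0 : 0 ≤ s) (hss' : s ≤ s') (hs' : s' ≤ T ^ 2) (hvol : volume E = ENNReal.ofReal s) :
    ∃ E' : Set Torus, E ⊆ E' ∧ MeasurableSet E' ∧ volume E' = ENNReal.ofReal s' := by
  have hfin : (volume : Measure Torus) E ≠ ⊤ := (measure_lt_top volume E).ne
  have hcompl : volume Eᶜ = ENNReal.ofReal (T ^ 2 - s) := by
    rw [measure_compl hE hfin, torus_univ, hvol, ← ENNReal.ofReal_sub _ hs0]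
  have hle : ENNReal.ofReal (s' - s) ≤ volume Eᶜ := by
    rw [hcompl]; exact ENNReal.ofReal_le_ofReal (by linarith)
  obtain ⟨D, hDsub, hDmeas, hDvol⟩ := exists_subset_measure_eq' hE.compl (by linarith) hle
  refine ⟨E ∪ D, subset_union_left, hE.union hDmeas, ?_⟩
  rw [measure_union (Set.disjoint_of_subset_right hDsub disjoint_compl_right) hDmeas,
    hvol, hDvol, ← ENNReal.ofReal_add hs0 (by linarith)]
  congr 1; ring


lemma Ms_nonneg (f : Torus → ℝ) (s : ℝ) : 0 ≤ Ms f s := by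
  apply Real.sSup_nonneg
  rintro r ⟨E, _, _, rfl⟩
  exact setIntegral_nonneg ‹MeasurableSet E› fun x _ => abs_nonneg _

lemma Ms_le {f : Torus → ℝ} (hf : Integrable f) (s : ℝ) : Ms f s ≤ ∫ x, |f x| := by
  apply Real.sSup_le
  · rintro r ⟨E, hE, _, rfl⟩
    exact setIntegral_le_integral hf.abs (Eventually.of_forall fun x => abs_nonneg _)
  · exact integral_nonneg fun x => abs_nonneg _

lemma Ms_bddAbove {f : Torus → ℝ} (hf : Integrable f) (s : ℝ) :
    BddAbove {r : ℝ | ∃ E : Set Torus, MeasurableSet E ∧ volume E = ENNReal.ofReal s ∧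
      r = ∫ x in E, |f x|} := by
  refine ⟨∫ x, |f x|, ?_⟩
  rintro r ⟨E, hE, _, rfl⟩
  exact setIntegral_le_integral hf.abs (Eventually.of_forall fun x => abs_nonneg _)

lemma Ms_mono {f : Torus → ℝ} (hf : Integrable f) : MonotoneOn (Ms f) (Icc 0 (T ^ 2)) := by
  rintro s ⟨hs0, _⟩ s' ⟨_, hs'⟩ hss'
  apply Real.sSup_le
  · rintro r ⟨E, hE, hvol, rfl⟩
    obtain ⟨E', hEE', hE'meas, hE'vol⟩ := exists_superset_measure_eq hE hs0 hss' hs' hvol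
    have h1 : (∫ x in E, |f x|) ≤ ∫ x in E', |f x| :=
      setIntegral_mono_set hf.abs.integrableOn
        (Eventually.of_forall fun x => abs_nonneg _) (HasSubset.Subset.eventuallyLE hEE')
    exact le_trans h1 (le_csSup (Ms_bddAbove hf s') ⟨E', hE'meas, hE'vol, rfl⟩)
  · exact Ms_nonneg f s'


/-- if ω ∈ L^{(1,q)}(𝕋²) for some 1 ≤ q < 2 then ω ∈ L^{(1,2)}(𝕋²), with the
quantitative small-s decay
∫₀^δ M_s(ω)² ds/s ≤ ‖ω‖²_{L^{(1,q)}} / (log(|𝕋²|/δ))^{(2−q)/q}. -/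
theorem stmt19 (q : ℝ) (hq1 : 1 ≤ q) (hq2 : q < 2)
    (ω : Torus → ℝ) (hω : Integrable ω)
    (hωq : IntegrableOn (fun s => Ms ω s ^ q / s) (Set.Ioc 0 ((2 * Real.pi) ^ 2))) :
    IntegrableOn (fun s => Ms ω s ^ (2:ℝ) / s) (Set.Ioc 0 ((2 * Real.pi) ^ 2)) ∧
    ∀ δ ∈ Set.Ioo (0:ℝ) ((2 * Real.pi) ^ 2),
      (∫ s in Set.Ioc (0:ℝ) δ, Ms ω s ^ (2:ℝ) / s) ≤
        ((∫ s in Set.Ioc (0:ℝ) ((2 * Real.pi) ^ 2), Ms ω s ^ q / s) ^ (1/q)) ^ (2:ℝ) /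
          Real.log ((2 * Real.pi) ^ 2 / δ) ^ ((2 - q) / q) := by
  set A : ℝ := (2 * Real.pi) ^ 2 with hAdef
  have hA : (0:ℝ) < A := by positivity
  have hq0 : (0:ℝ) < q := lt_of_lt_of_le one_pos hq1
  have hnn : ∀ s, 0 ≤ Ms ω s := Ms_nonneg ω
  have hmono : MonotoneOn (Ms ω) (Icc 0 A) := Ms_mono hω
  have haem : AEMeasurable (Ms ω) (volume.restrict (Ioc 0 A)) :=
    aemeasurable_restrict_of_monotoneOn measurableSet_Ioc (hmono.mono Ioc_subset_Icc_self)
  have haem2 : AEStronglyMeasurable (fun s => Ms ω s ^ (2:ℝ) / s)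
      (volume.restrict (Ioc 0 A)) := by
    have hr : Measurable fun x : ℝ => x ^ (2:ℝ) :=
      (Real.continuous_rpow_const (by norm_num)).measurable
    exact ((hr.comp_aemeasurable haem).div aemeasurable_id).aestronglyMeasurable
  set N : ℝ := ∫ x, |ω x| with hNdef
  have hN0 : 0 ≤ N := integral_nonneg fun x => abs_nonneg _
  -- first claim
  have hint2 : IntegrableOn (fun s => Ms ω s ^ (2:ℝ) / s) (Ioc 0 A) := by
    apply Integrable.mono' (hωq.const_mul (N ^ (2 - q))) haem2
    filter_upwards [ae_restrict_mem measurableSet_Ioc] with s hs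
    rw [Real.norm_eq_abs, abs_of_nonneg (div_nonneg (Real.rpow_nonneg (hnn s) _) hs.1.le)]
    have h1 : Ms ω s ^ (2:ℝ) ≤ N ^ (2 - q) * Ms ω s ^ q := by
      have h2 : Ms ω s ^ (2:ℝ) = Ms ω s ^ (2 - q) * Ms ω s ^ q := by
        rw [← Real.rpow_add_of_nonneg (hnn s) (by linarith) hq0.le, sub_add_cancel]
      rw [h2]
      exact mul_le_mul_of_nonneg_right
        (Real.rpow_le_rpow (hnn s) (Ms_le hω s) (by linarith))
        (Real.rpow_nonneg (hnn s) q)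
    rw [div_eq_mul_inv, div_eq_mul_inv, ← mul_assoc]
    exact mul_le_mul_of_nonneg_right h1 (inv_nonneg.2 hs.1.le)
  refine ⟨hint2, ?_⟩
  -- pointwise key bound
  have hae : 0 ≤ᵐ[volume.restrict (Ioc 0 A)] fun t => Ms ω t ^ q / t :=
    (ae_restrict_iff' measurableSet_Ioc).2 (Eventually.of_forall fun t ht =>
      div_nonneg (Real.rpow_nonneg (hnn t) q) ht.1.le)
  set I : ℝ := ∫ s in Set.Ioc (0:ℝ) A, Ms ω s ^ q / s with hIdef
  have hI0 : 0 ≤ I := setIntegral_nonneg measurableSet_Ioc fun t ht =>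
    div_nonneg (Real.rpow_nonneg (hnn t) q) ht.1.le
  have key : ∀ s ∈ Ioc (0:ℝ) A, Ms ω s ^ q * Real.log (A / s) ≤ I := by
    intro s hs
    have hlog : (∫ t in Ioc s A, (1:ℝ)/t) = Real.log (A/s) := by
      rw [← intervalIntegral.integral_of_le hs.2]
      exact integral_one_div (notMem_uIcc_of_lt hs.1 hA)
    have heq : Ms ω s ^ q * Real.log (A/s) = ∫ t in Ioc s A, Ms ω s ^ q / t := by
      rw [← hlog, ← integral_const_mul]
      congr 1; ext t; rw [mul_one_div]
    have hcont : IntegrableOn (fun t => Ms ω s ^ q / t) (Ioc s A) := by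
      have hc : ContinuousOn (fun t => Ms ω s ^ q / t) (Icc s A) :=
        continuousOn_const.div continuousOn_id (fun x hx => ne_of_gt (lt_of_lt_of_le hs.1 hx.1))
      exact hc.integrableOn_Icc.mono_set Ioc_subset_Icc_self
    have hstep1 : (∫ t in Ioc s A, Ms ω s ^ q / t) ≤ ∫ t in Ioc s A, Ms ω t ^ q / t := by
      apply setIntegral_mono_on hcont (hωq.mono_set (Ioc_subset_Ioc_left hs.1.le))
        measurableSet_Ioc
      intro t ht
      have ht0 : (0:ℝ) < t := hs.1.trans ht.1
      have hMle : Ms ω s ≤ Ms ω t :=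
        hmono ⟨hs.1.le, hs.2⟩ ⟨ht0.le, ht.2⟩ ht.1.le
      rw [div_eq_mul_inv, div_eq_mul_inv]
      exact mul_le_mul_of_nonneg_right (Real.rpow_le_rpow (hnn s) hMle hq0.le)
        (inv_nonneg.2 ht0.le)
    have hstep2 : (∫ t in Ioc s A, Ms ω t ^ q / t) ≤ I :=
      setIntegral_mono_set hωq hae ((Ioc_subset_Ioc_left hs.1.le).eventuallyLE)
    rw [heq]; exact le_trans hstep1 hstep2
  -- second claim
  rintro δ ⟨hδ0, hδA⟩
  set L : ℝ := Real.log (A / δ) with hLdef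
  have hL : 0 < L := Real.log_pos ((one_lt_div hδ0).2 hδA)
  set e : ℝ := (2 - q) / q with hedef
  have he0 : 0 ≤ e := div_nonneg (by linarith) hq0.le
  have hptwise : ∀ s ∈ Ioc (0:ℝ) δ, Ms ω s ^ (2:ℝ) / s ≤ (I/L) ^ e * (Ms ω s ^ q / s) := by
    intro s hs
    have hsA : s ∈ Ioc (0:ℝ) A := ⟨hs.1, hs.2.trans hδA.le⟩
    have hlog_ge : L ≤ Real.log (A / s) := by
      apply Real.log_le_log (by positivity)
      exact div_le_div_of_nonneg_left hA.le hs.1 hs.2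
    have hMq : Ms ω s ^ q ≤ I / L := by
      rw [le_div_iff₀ hL]
      calc Ms ω s ^ q * L ≤ Ms ω s ^ q * Real.log (A/s) :=
            mul_le_mul_of_nonneg_left hlog_ge (Real.rpow_nonneg (hnn s) q)
        _ ≤ I := key s hsA
    have h2 : Ms ω s ^ (2:ℝ) = Ms ω s ^ (2 - q) * Ms ω s ^ q := by
      rw [← Real.rpow_add_of_nonneg (hnn s) (by linarith) hq0.le, sub_add_cancel]
    have h3 : Ms ω s ^ (2 - q) = (Ms ω s ^ q) ^ e := by
      rw [← Real.rpow_mul (hnn s)]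
      congr 1
      rw [hedef]
      field_simp
    have h4 : Ms ω s ^ (2 - q) ≤ (I/L) ^ e := by
      rw [h3]
      exact Real.rpow_le_rpow (Real.rpow_nonneg (hnn s) q) hMq he0
    rw [h2, mul_div_assoc]
    exact mul_le_mul_of_nonneg_right h4
      (div_nonneg (Real.rpow_nonneg (hnn s) q) hs.1.le)
  have hILnn : 0 ≤ (I/L) ^ e := Real.rpow_nonneg (div_nonneg hI0 hL.le) e
  have hmain : (∫ s in Set.Ioc (0:ℝ) δ, Ms ω s ^ (2:ℝ) / s) ≤ (I/L) ^ e * I := by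
    calc (∫ s in Set.Ioc (0:ℝ) δ, Ms ω s ^ (2:ℝ) / s)
        ≤ ∫ s in Set.Ioc (0:ℝ) δ, (I/L) ^ e * (Ms ω s ^ q / s) := by
          have hc2 : IntegrableOn (fun s => (I/L) ^ e * (Ms ω s ^ q / s)) (Ioc 0 A) :=
            hωq.const_mul _
          exact setIntegral_mono_on (hint2.mono_set (Ioc_subset_Ioc_right hδA.le))
            (hc2.mono_set (Ioc_subset_Ioc_right hδA.le)) measurableSet_Ioc hptwise
      _ = (I/L) ^ e * ∫ s in Set.Ioc (0:ℝ) δ, Ms ω s ^ q / s := integral_const_mul _ _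
      _ ≤ (I/L) ^ e * I := mul_le_mul_of_nonneg_left
            (setIntegral_mono_set hωq hae ((Ioc_subset_Ioc_right hδA.le).eventuallyLE)) hILnn
  have hqne : q ≠ 0 := hq0.ne'
  have hfinal : (I/L) ^ e * I = (I ^ (1/q)) ^ (2:ℝ) / L ^ e := by
    have h1 : (I ^ (1/q)) ^ (2:ℝ) = I ^ (2/q) := by
      rw [← Real.rpow_mul hI0]
      congr 1; ring
    have h2 : I ^ e * I = I ^ (2/q) := by
      have h3 := Real.rpow_add_of_nonneg hI0 he0 zero_le_one
      rw [Real.rpow_one] at h3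
      rw [← h3]
      rw [hedef, sub_div, div_self hqne]
      ring
    rw [h1, Real.div_rpow hI0 hL.le, div_mul_eq_mul_div, h2]
  exact le_trans hmain (le_of_eq hfinal)

end
end
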